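/- arXiv:1710.08079 — 3 statements merged into one kernel-verified Lean document; each statement's English description precedes it below -/
import Mathlib

section
/- Under the setup of Lemma (rank-loss potential bound): the N-step potential of rank loss at the zero vector is at most exp(−γ²N/2). That is, if X = (X_1,…,X_k) counts N i.i.d. draws from u^Y_γ, then E[L_rnk^Y(X)] ≤ exp(−γ²N/2). -/
open MeasureTheory ProbabilityTheory

private lemma body_int {Ω : Type*} [MeasurableSpace Ω] (μ : Measure Ω) [IsProbabilityMeasure μ]
    {k N : ℕ} (D : Fin N → Ω → Fin k) (hmeas : ∀ i, Measurable (D i)) (l r : Fin k) :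
    Integrable (fun ω =>
      ((if ((Finset.univ.filter fun i => D i ω = l).card : ℝ) <
          (Finset.univ.filter fun i => D i ω = r).card then (1 : ℝ) else 0) +
        (1 / 2) * (if ((Finset.univ.filter fun i => D i ω = l).card : ℝ) =
          (Finset.univ.filter fun i => D i ω = r).card then 1 else 0))) μ := by
  classical
  have hc : ∀ j : Fin k, Measurable fun ω => (Finset.univ.filter fun i => D i ω = j).card := by
    intro j
    simp only [Finset.card_filter]
    exact Finset.measurable_sum _ fun i _ =>
      Measurable.ite (hmeas i (measurableSet_singleton j)) measurable_const measurable_const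
  have hTmeas : Measurable fun ω =>
      ((if ((Finset.univ.filter fun i => D i ω = l).card : ℝ) <
          (Finset.univ.filter fun i => D i ω = r).card then (1 : ℝ) else 0) +
        (1 / 2) * (if ((Finset.univ.filter fun i => D i ω = l).card : ℝ) =
          (Finset.univ.filter fun i => D i ω = r).card then 1 else 0)) := by
    have : (fun ω =>
        ((if ((Finset.univ.filter fun i => D i ω = l).card : ℝ) <
            (Finset.univ.filter fun i => D i ω = r).card then (1 : ℝ) else 0) +
          (1 / 2) * (if ((Finset.univ.filter fun i => D i ω = l).card : ℝ) =
            (Finset.univ.filter fun i => D i ω = r).card then 1 else 0))) =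
        (fun p : ℕ × ℕ => ((if (p.1 : ℝ) < (p.2 : ℝ) then (1 : ℝ) else 0) +
          (1 / 2) * (if (p.1 : ℝ) = (p.2 : ℝ) then 1 else 0))) ∘
        (fun ω => ((Finset.univ.filter fun i => D i ω = l).card,
          (Finset.univ.filter fun i => D i ω = r).card)) := rfl
    rw [this]
    exact (measurable_of_countable _).comp ((hc l).prodMk (hc r))
  refine Integrable.mono' (integrable_const 2) hTmeas.aestronglyMeasurable ?_
  filter_upwards with ω
  split_ifs <;> simp [Real.norm_eq_abs, abs_le] <;> norm_num

private lemma pair_bound {Ω : Type*} [MeasurableSpace Ω] (μ : Measure Ω) [IsProbabilityMeasure μ]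
    {k N : ℕ} (Y : Finset (Fin k)) (γ a ρ σ : ℝ) (ha : 0 < a) (hγ0 : 0 < γ)
    (hρ : 0 < ρ) (hσ : 0 < σ) (hσ1 : 1 ≤ σ) (hρσ : ρ * σ = 1)
    (hsum1 : ∑ j : Fin k, (if j ∈ Y then a + γ else a) = 1)
    (D : Fin N → Ω → Fin k) (hmeas : ∀ i, Measurable (D i))
    (hindep : iIndepFun D μ)
    (hident : ∀ i j, μ {ω | D i ω = j} = ENNReal.ofReal (if j ∈ Y then a + γ else a))
    (l r : Fin k) (hl : l ∈ Y) (hr : r ∉ Y) :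
    ∫ ω, ((if ((Finset.univ.filter fun i => D i ω = l).card : ℝ) <
              (Finset.univ.filter fun i => D i ω = r).card then (1 : ℝ) else 0) +
            (1 / 2) * (if ((Finset.univ.filter fun i => D i ω = l).card : ℝ) =
              (Finset.univ.filter fun i => D i ω = r).card then 1 else 0)) ∂μ ≤
      (1 - (a + γ) - a + ((a + γ) * ρ + a * σ)) ^ N := by
  classical
  have hlr : l ≠ r := fun h => hr (h ▸ hl)
  set g : Fin k → ℝ := fun j => if j = l then ρ else if j = r then σ else 1 with hgdef
  have hg_pos : ∀ j, 0 < g j := by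
    intro j; simp only [hgdef]; split_ifs
    · exact hρ
    · exact hσ
    · norm_num
  have hg_le : ∀ j, g j ≤ σ := by
    intro j; simp only [hgdef]; split_ifs
    · nlinarith
    · exact le_rfl
    · exact hσ1
  -- counts are measurable
  have hc : ∀ j : Fin k, Measurable fun ω => (Finset.univ.filter fun i => D i ω = j).card := by
    intro j
    simp only [Finset.card_filter]
    exact Finset.measurable_sum _ fun i _ =>
      Measurable.ite (hmeas i (measurableSet_singleton j)) measurable_const measurable_const
  -- the integrand is measurable and bounded
  have hTmeas : Measurable fun ω =>
      ((if ((Finset.univ.filter fun i => D i ω = l).card : ℝ) <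
          (Finset.univ.filter fun i => D i ω = r).card then (1 : ℝ) else 0) +
        (1 / 2) * (if ((Finset.univ.filter fun i => D i ω = l).card : ℝ) =
          (Finset.univ.filter fun i => D i ω = r).card then 1 else 0)) := by
    have : (fun ω =>
        ((if ((Finset.univ.filter fun i => D i ω = l).card : ℝ) <
            (Finset.univ.filter fun i => D i ω = r).card then (1 : ℝ) else 0) +
          (1 / 2) * (if ((Finset.univ.filter fun i => D i ω = l).card : ℝ) =
            (Finset.univ.filter fun i => D i ω = r).card then 1 else 0))) =
        (fun p : ℕ × ℕ => ((if (p.1 : ℝ) < (p.2 : ℝ) then (1 : ℝ) else 0) +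
          (1 / 2) * (if (p.1 : ℝ) = (p.2 : ℝ) then 1 else 0))) ∘
        (fun ω => ((Finset.univ.filter fun i => D i ω = l).card,
          (Finset.univ.filter fun i => D i ω = r).card)) := rfl
    rw [this]
    exact (measurable_of_countable _).comp ((hc l).prodMk (hc r))
  have hTint : Integrable (fun ω =>
      ((if ((Finset.univ.filter fun i => D i ω = l).card : ℝ) <
          (Finset.univ.filter fun i => D i ω = r).card then (1 : ℝ) else 0) +
        (1 / 2) * (if ((Finset.univ.filter fun i => D i ω = l).card : ℝ) =
          (Finset.univ.filter fun i => D i ω = r).card then 1 else 0))) μ := by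
    refine Integrable.mono' (integrable_const 2) hTmeas.aestronglyMeasurable ?_
    filter_upwards with ω
    have : ∀ x y : ℝ, |x + 1/2*y| ≤ 2 → True := fun _ _ _ => trivial
    split_ifs <;> simp [Real.norm_eq_abs, abs_le] <;> norm_num
  -- the product function
  have hGmeas : Measurable fun ω => ∏ i, g (D i ω) :=
    Finset.measurable_prod _ fun i _ => (measurable_of_countable g).comp (hmeas i)
  have hGint : Integrable (fun ω => ∏ i, g (D i ω)) μ := by
    refine Integrable.mono' (integrable_const (σ ^ N)) hGmeas.aestronglyMeasurable ?_
    filter_upwards with ω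
    rw [Real.norm_eq_abs, abs_of_nonneg (Finset.prod_nonneg fun i _ => (hg_pos _).le)]
    calc ∏ i, g (D i ω) ≤ ∏ _i : Fin N, σ :=
          Finset.prod_le_prod (fun i _ => (hg_pos _).le) (fun i _ => hg_le _)
      _ = σ ^ N := by simp
  -- pointwise bound
  have hpt : ∀ ω,
      ((if ((Finset.univ.filter fun i => D i ω = l).card : ℝ) <
          (Finset.univ.filter fun i => D i ω = r).card then (1 : ℝ) else 0) +
        (1 / 2) * (if ((Finset.univ.filter fun i => D i ω = l).card : ℝ) =
          (Finset.univ.filter fun i => D i ω = r).card then 1 else 0)) ≤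
      ∏ i, g (D i ω) := by
    intro ω
    set m := (Finset.univ.filter fun i => D i ω = l).card with hm
    set n := (Finset.univ.filter fun i => D i ω = r).card with hn
    have hprodid : ∏ i, g (D i ω) = ρ ^ m * σ ^ n := by
      have h1 : ∀ i : Fin N, g (D i ω) =
          ρ ^ (if D i ω = l then 1 else 0) * σ ^ (if D i ω = r then 1 else 0) := by
        intro i
        by_cases h1 : D i ω = l
        · have h2 : ¬ D i ω = r := fun h => hlr (h1 ▸ h ▸ rfl)
          simp [hgdef, h1, h2, hlr, Ne.symm hlr]
        · by_cases h2 : D i ω = r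
          · simp [hgdef, h1, h2, hlr, Ne.symm hlr]
          · simp [hgdef, h1, h2]
      rw [Finset.prod_congr rfl fun i _ => h1 i, Finset.prod_mul_distrib,
        Finset.prod_pow_eq_pow_sum, Finset.prod_pow_eq_pow_sum,
        ← Finset.card_filter, ← Finset.card_filter]
    rw [hprodid]
    rcases lt_trichotomy m n with h | h | h
    · rw [if_pos (by exact_mod_cast h), if_neg (by exact_mod_cast h.ne)]
      have hmn : m + (n - m) = n := by omega
      have hid : (ρ * σ) ^ m * σ ^ (n - m) = ρ ^ m * σ ^ n := by
        rw [mul_pow, mul_assoc, ← pow_add, hmn]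
      rw [← hid, hρσ, one_pow, one_mul]
      calc (1:ℝ) + 1/2*0 = 1 := by ring
        _ ≤ σ ^ (n - m) := one_le_pow₀ hσ1
    · rw [if_neg (by simp [h]), if_pos (by exact_mod_cast h)]
      have : ρ ^ m * σ ^ n = (ρ * σ) ^ m := by rw [← h, mul_pow]
      rw [this, hρσ, one_pow]; norm_num
    · rw [if_neg (by exact_mod_cast not_lt.mpr h.le), if_neg (by
        exact_mod_cast h.ne')]
      norm_num
      positivity
  -- independence
  set Z : Fin N → Ω → ℝ := fun i ω => Real.log (g (D i ω)) with hZdef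
  have hZmeas : ∀ i, Measurable (Z i) := fun i =>
    (measurable_of_countable (fun j => Real.log (g j))).comp (hmeas i)
  have hZindep : iIndepFun Z μ :=
    hindep.comp (fun _ j => Real.log (g j)) (fun _ => measurable_of_countable _)
  have hmgf := hZindep.mgf_sum (t := 1) hZmeas Finset.univ
  -- per-factor integral
  have hint_g : ∀ i : Fin N, ∫ ω, g (D i ω) ∂μ
      = 1 - (a + γ) - a + ((a + γ) * ρ + a * σ) := by
    intro i
    have hmap : IsProbabilityMeasure (μ.map (D i)) :=
      Measure.isProbabilityMeasure_map (hmeas i).aemeasurable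
    rw [← integral_map (hmeas i).aemeasurable (measurable_of_countable g).aestronglyMeasurable,
      integral_fintype Integrable.of_finite]
    have hone : ∀ j, ((μ.map (D i)) {j}).toReal = (if j ∈ Y then a + γ else a) := by
      intro j
      rw [Measure.map_apply (hmeas i) (measurableSet_singleton j)]
      have hpre : D i ⁻¹' {j} = {ω | D i ω = j} := rfl
      rw [hpre, hident i j, ENNReal.toReal_ofReal (by split_ifs <;> positivity)]
    simp only [measureReal_def, hone, smul_eq_mul]
    rw [← Finset.add_sum_erase _ _ (Finset.mem_univ l)]
    have hrl : r ∈ Finset.univ.erase l := Finset.mem_erase.mpr ⟨Ne.symm hlr, Finset.mem_univ r⟩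
    rw [← Finset.add_sum_erase _ _ hrl]
    have hgl : g l = ρ := by simp [hgdef]
    have hgr : g r = σ := by simp [hgdef, Ne.symm hlr]
    have hrest : ∑ j ∈ (Finset.univ.erase l).erase r, (if j ∈ Y then a + γ else a) * g j
        = 1 - (a + γ) - a := by
      have h1 : ∀ j ∈ (Finset.univ.erase l).erase r,
          (if j ∈ Y then a + γ else a) * g j = (if j ∈ Y then a + γ else a) := by
        intro j hj
        have hjr : j ≠ r := (Finset.mem_erase.mp hj).1
        have hjl : j ≠ l := (Finset.mem_erase.mp (Finset.mem_erase.mp hj).2).1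
        simp [hgdef, hjl, hjr]
      rw [Finset.sum_congr rfl h1]
      have e1 := Finset.add_sum_erase Finset.univ
        (fun j => if j ∈ Y then a + γ else a) (Finset.mem_univ l)
      have e2 := Finset.add_sum_erase (Finset.univ.erase l)
        (fun j => if j ∈ Y then a + γ else a) hrl
      simp only [if_pos hl, if_neg hr, hsum1] at e1 e2
      linarith
    rw [hrest, if_pos hl, if_neg hr, hgl, hgr]
    ring
  calc ∫ ω, ((if ((Finset.univ.filter fun i => D i ω = l).card : ℝ) <
              (Finset.univ.filter fun i => D i ω = r).card then (1 : ℝ) else 0) +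
            (1 / 2) * (if ((Finset.univ.filter fun i => D i ω = l).card : ℝ) =
              (Finset.univ.filter fun i => D i ω = r).card then 1 else 0)) ∂μ
      ≤ ∫ ω, ∏ i, g (D i ω) ∂μ := integral_mono hTint hGint hpt
    _ = mgf (∑ i, Z i) μ 1 := by
        simp only [mgf, one_mul]
        refine integral_congr_ae (Filter.Eventually.of_forall fun ω => ?_)
        show ∏ i, g (D i ω) = Real.exp ((∑ i, Z i) ω)
        rw [Finset.sum_apply, Real.exp_sum]
        refine Finset.prod_congr rfl fun i _ => ?_
        simp only [hZdef]
        rw [Real.exp_log (hg_pos _)]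
    _ = ∏ i, mgf (Z i) μ 1 := hmgf
    _ = ∏ i : Fin N, (1 - (a + γ) - a + ((a + γ) * ρ + a * σ)) := by
        refine Finset.prod_congr rfl fun i _ => ?_
        rw [← hint_g i]
        simp only [mgf, one_mul]
        refine integral_congr_ae (Filter.Eventually.of_forall fun ω => ?_)
        show Real.exp (Z i ω) = g (D i ω)
        simp only [hZdef]
        rw [Real.exp_log (hg_pos _)]
    _ = (1 - (a + γ) - a + ((a + γ) * ρ + a * σ)) ^ N := by
        rw [Finset.prod_const]; simp

set_option maxHeartbeats 1000000 in
/-- Rank-loss potential bound: if `X` counts `N` i.i.d. draws `D i` from the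
edge-over-random distribution `u^Y_γ`, then `E[L_rnk^Y(X)] ≤ exp(-γ²N/2)`. -/
theorem stmt_11 {Ω : Type*} [MeasurableSpace Ω] (μ : Measure Ω) [IsProbabilityMeasure μ]
    (k N : ℕ) (hk : 2 ≤ k) (Y : Finset (Fin k)) (hY : Y.Nonempty) (hY' : Y ≠ Finset.univ)
    (γ a : ℝ) (hγ0 : 0 < γ) (hγ1 : γ < 1) (ha : 0 < a)
    (D : Fin N → Ω → Fin k) (hmeas : ∀ i, Measurable (D i))
    (hindep : iIndepFun D μ)
    (hident : ∀ i j, μ {ω | D i ω = j} =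
      ENNReal.ofReal (if j ∈ Y then a + γ else a)) :
    ∫ ω, (1 / ((Y.card : ℝ) * Yᶜ.card)) *
        ∑ l ∈ Y, ∑ r ∈ Yᶜ,
          ((if ((Finset.univ.filter fun i => D i ω = l).card : ℝ) <
              (Finset.univ.filter fun i => D i ω = r).card then (1 : ℝ) else 0) +
            (1 / 2) * (if ((Finset.univ.filter fun i => D i ω = l).card : ℝ) =
              (Finset.univ.filter fun i => D i ω = r).card then 1 else 0)) ∂μ ≤
      Real.exp (-γ ^ 2 * N / 2) := by
  classical
  have hYc : Yᶜ.Nonempty := Finset.nonempty_iff_ne_empty.mpr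
    (fun h => hY' ((Finset.compl_eq_empty_iff Y).mp h))
  have hYcard : 0 < (Y.card : ℝ) := by exact_mod_cast Finset.card_pos.mpr hY
  have hYccard : 0 < (Yᶜ.card : ℝ) := by exact_mod_cast Finset.card_pos.mpr hYc
  rcases Nat.eq_zero_or_pos N with rfl | hN
  · -- N = 0 : the loss is identically 1/2
    have hconst : ∀ ω : Ω, (1 / ((Y.card : ℝ) * Yᶜ.card)) *
        ∑ l ∈ Y, ∑ r ∈ Yᶜ,
          ((if ((Finset.univ.filter fun i => D i ω = l).card : ℝ) <
              (Finset.univ.filter fun i => D i ω = r).card then (1 : ℝ) else 0) +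
            (1 / 2) * (if ((Finset.univ.filter fun i => D i ω = l).card : ℝ) =
              (Finset.univ.filter fun i => D i ω = r).card then 1 else 0)) = 1 / 2 := by
      intro ω
      simp only [Finset.univ_eq_empty, Finset.filter_empty, Finset.card_empty, Nat.cast_zero]
      norm_num
      field_simp
    simp only [hconst, integral_const, measure_univ, ENNReal.toReal_one, smul_eq_mul, one_mul]
    have : Real.exp (-γ ^ 2 * (0 : ℕ) / 2) = 1 := by norm_num
    rw [this]
    norm_num
  · -- N ≥ 1
    have i0 : Fin N := ⟨0, hN⟩
    -- total probability is 1
    have hsum1 : ∑ j : Fin k, (if j ∈ Y then a + γ else a) = 1 := by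
      have hdisj : Pairwise (Function.onFun Disjoint fun j : Fin k => {ω | D i0 ω = j}) := by
        intro j1 j2 hne
        simp only [Function.onFun, Set.disjoint_left]
        rintro ω h1 h2
        exact hne (h1 ▸ h2 ▸ rfl)
      have hmeasj : ∀ j : Fin k, MeasurableSet {ω | D i0 ω = j} := fun j =>
        hmeas i0 (measurableSet_singleton j)
      have hcov : (⋃ j : Fin k, {ω | D i0 ω = j}) = Set.univ := by
        ext ω; simp
      have h := measure_iUnion (μ := μ) hdisj hmeasj
      rw [hcov, measure_univ, tsum_fintype] at h
      simp only [hident i0] at h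
      have h3 := congrArg ENNReal.toReal h
      rw [ENNReal.toReal_one, ENNReal.toReal_sum (fun j _ => ENNReal.ofReal_ne_top)] at h3
      calc ∑ j : Fin k, (if j ∈ Y then a + γ else a)
          = ∑ j : Fin k, (ENNReal.ofReal (if j ∈ Y then a + γ else a)).toReal :=
            Finset.sum_congr rfl fun j _ =>
              (ENNReal.toReal_ofReal (by split_ifs <;> positivity)).symm
        _ = 1 := h3.symm
    have hsplit : (Y.card : ℝ) * (a + γ) + (Yᶜ.card : ℝ) * a = 1 := by
      have e : ∑ j : Fin k, (if j ∈ Y then a + γ else a)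
          = (Y.card : ℝ) * (a + γ) + (Yᶜ.card : ℝ) * a := by
        rw [← Finset.sum_add_sum_compl Y]
        congr 1
        · rw [Finset.sum_congr rfl fun j hj => if_pos hj, Finset.sum_const, nsmul_eq_mul]
        · rw [Finset.sum_congr rfl fun j hj => if_neg (Finset.mem_compl.mp hj),
            Finset.sum_const, nsmul_eq_mul]
      rw [← e, hsum1]
    have h2aγ : 2 * a + γ ≤ 1 := by
      have h1Y : (1 : ℝ) ≤ (Y.card : ℝ) := by exact_mod_cast Finset.card_pos.mpr hY
      have h1Yc : (1 : ℝ) ≤ (Yᶜ.card : ℝ) := by exact_mod_cast Finset.card_pos.mpr hYc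
      nlinarith [mul_le_mul_of_nonneg_right h1Y (by positivity : (0:ℝ) ≤ a + γ),
        mul_le_mul_of_nonneg_right h1Yc ha.le]
    -- square-root quantities
    set s : ℝ := Real.sqrt a with hsdef
    set t : ℝ := Real.sqrt (a + γ) with htdef
    have hs0 : 0 < s := Real.sqrt_pos.mpr ha
    have ht0 : 0 < t := Real.sqrt_pos.mpr (by linarith)
    have hs2 : s ^ 2 = a := Real.sq_sqrt ha.le
    have ht2 : t ^ 2 = a + γ := Real.sq_sqrt (by linarith)
    have hst : s ≤ t := Real.sqrt_le_sqrt (by linarith)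
    have hρ : 0 < s / t := by positivity
    have hσ : 0 < t / s := by positivity
    have hσ1 : 1 ≤ t / s := (one_le_div hs0).mpr hst
    have hρσ : (s / t) * (t / s) = 1 := by field_simp
    set M : ℝ := 1 - (a + γ) - a + ((a + γ) * (s / t) + a * (t / s)) with hMdef
    have hMeq : M = 1 - 2 * a - γ + 2 * (s * t) := by
      have e1 : (a + γ) * (s / t) = s * t := by rw [← ht2]; field_simp
      have e2 : a * (t / s) = s * t := by rw [← hs2]; field_simp
      rw [hMdef, e1, e2]; ring
    have hM0 : 0 ≤ M := by
      rw [hMeq]; nlinarith [mul_nonneg hs0.le ht0.le]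
    have hM1 : M ≤ 1 - γ ^ 2 / 2 := by
      rw [hMeq]
      have hsum2 : (t + s) ^ 2 ≤ 2 := by nlinarith [sq_nonneg (t - s)]
      have hγeq : γ = t ^ 2 - s ^ 2 := by rw [hs2, ht2]; ring
      nlinarith [mul_nonneg (sq_nonneg (t - s)) (by linarith : (0:ℝ) ≤ 2 - (t + s) ^ 2)]
    have hexpN : M ^ N ≤ Real.exp (-γ ^ 2 * N / 2) := by
      have hγ2 : (0:ℝ) ≤ 1 - γ ^ 2 / 2 := by nlinarith
      have hexp1 : 1 - γ ^ 2 / 2 ≤ Real.exp (-γ ^ 2 / 2) := by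
        have := Real.add_one_le_exp (-γ ^ 2 / 2)
        linarith
      calc M ^ N ≤ (1 - γ ^ 2 / 2) ^ N := pow_le_pow_left₀ hM0 hM1 N
        _ ≤ Real.exp (-γ ^ 2 / 2) ^ N := pow_le_pow_left₀ hγ2 hexp1 N
        _ = Real.exp (-γ ^ 2 * N / 2) := by
            rw [← Real.exp_nat_mul]; congr 1; ring
    -- assemble
    rw [integral_const_mul, integral_finset_sum _
      (fun l _ => integrable_finset_sum _ fun r _ => body_int μ D hmeas l r)]
    calc (1 / ((Y.card : ℝ) * Yᶜ.card)) * ∑ l ∈ Y, ∫ ω, ∑ r ∈ Yᶜ,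
          ((if ((Finset.univ.filter fun i => D i ω = l).card : ℝ) <
              (Finset.univ.filter fun i => D i ω = r).card then (1 : ℝ) else 0) +
            (1 / 2) * (if ((Finset.univ.filter fun i => D i ω = l).card : ℝ) =
              (Finset.univ.filter fun i => D i ω = r).card then 1 else 0)) ∂μ
        = (1 / ((Y.card : ℝ) * Yᶜ.card)) * ∑ l ∈ Y, ∑ r ∈ Yᶜ, ∫ ω,
          ((if ((Finset.univ.filter fun i => D i ω = l).card : ℝ) <
              (Finset.univ.filter fun i => D i ω = r).card then (1 : ℝ) else 0) +
            (1 / 2) * (if ((Finset.univ.filter fun i => D i ω = l).card : ℝ) =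
              (Finset.univ.filter fun i => D i ω = r).card then 1 else 0)) ∂μ := by
          congr 1
          exact Finset.sum_congr rfl fun l _ =>
            integral_finset_sum _ fun r _ => body_int μ D hmeas l r
      _ ≤ (1 / ((Y.card : ℝ) * Yᶜ.card)) * ∑ l ∈ Y, ∑ r ∈ Yᶜ, M ^ N := by
          refine mul_le_mul_of_nonneg_left ?_ (by positivity)
          refine Finset.sum_le_sum fun l hl => Finset.sum_le_sum fun r hr => ?_
          exact pair_bound μ Y γ a (s / t) (t / s) ha hγ0 hρ hσ hσ1 hρσ hsum1 D hmeas
            hindep hident l r hl (Finset.mem_compl.mp hr)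
      _ = M ^ N := by
          simp only [Finset.sum_const, nsmul_eq_mul]
          field_simp
      _ ≤ Real.exp (-γ ^ 2 * N / 2) := hexpN
end

section
/- Under the same random-walk setup, the N-step potential of hinge loss at the zero vector is at most (N+1)·exp(−γ²N/2): E[L_hinge^Y(X)] ≤ (N+1)·exp(−γ²N/2). -/
open MeasureTheory ProbabilityTheory

/-- Integral of a function of a finite-valued random variable. -/
lemma aux_integral_comp_fin {Ω : Type*} [MeasurableSpace Ω] (μ : Measure Ω) [IsFiniteMeasure μ]
    {k : ℕ} (X : Ω → Fin k) (hX : Measurable X) (f : Fin k → ℝ) :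
    ∫ ω, f (X ω) ∂μ = ∑ j, (μ (X ⁻¹' {j})).toReal * f j := by
  have hpt : ∀ ω, f (X ω) = ∑ j, Set.indicator (X ⁻¹' {j}) (fun _ => f j) ω := by
    intro ω
    rw [Finset.sum_eq_single (X ω)]
    · simp [Set.indicator_apply]
    · intro j _ hj
      simp [Set.indicator_apply, Set.mem_preimage, Ne.symm hj]
    · simp
  simp_rw [hpt]
  rw [integral_finset_sum _ (fun j _ =>
    (integrable_const (f j)).indicator (hX (measurableSet_singleton j)))]
  refine Finset.sum_congr rfl fun j _ => ?_
  rw [integral_indicator_const _ (hX (measurableSet_singleton j)), smul_eq_mul]; rfl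

/-- Product of integrals for independent real random variables. -/
lemma aux_integral_prod {Ω ι : Type*} [MeasurableSpace Ω] {μ : Measure Ω}
    [IsProbabilityMeasure μ] (f : ι → Ω → ℝ) (hm : ∀ i, Measurable (f i))
    (hindep : iIndepFun f μ) (s : Finset ι) :
    ∫ ω, ∏ i ∈ s, f i ω ∂μ = ∏ i ∈ s, ∫ ω, f i ω ∂μ := by
  classical
  induction s using Finset.cons_induction with
  | empty => simp
  | cons i s hi ih =>
    have h1 : IndepFun (∏ j ∈ s, f j) (f i) μ :=
      hindep.indepFun_finsetProd_of_notMem hm hi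
    have hmprod : Measurable (∏ j ∈ s, f j) := by
      have : (∏ j ∈ s, f j) = fun ω => ∏ j ∈ s, f j ω := by
        ext ω; simp [Finset.prod_apply]
      rw [this]
      exact Finset.measurable_prod s (fun j _ => hm j)
    have h2 := h1.integral_mul_eq_mul_integral hmprod.aestronglyMeasurable (hm i).aestronglyMeasurable
    simp only [Finset.prod_cons]
    rw [← ih]
    have h3 : (fun ω => f i ω * ∏ j ∈ s, f j ω) = (∏ j ∈ s, f j) * f i := by
      ext ω; simp [Finset.prod_apply, mul_comm]
    have h4 : (∫ ω, ∏ j ∈ s, f j ω ∂μ) = integral μ (∏ j ∈ s, f j) := by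
      congr 1; ext ω; simp [Finset.prod_apply]
    calc ∫ ω, f i ω * ∏ j ∈ s, f j ω ∂μ
        = integral μ ((∏ j ∈ s, f j) * f i) := by rw [← h3]
      _ = integral μ (∏ j ∈ s, f j) * integral μ (f i) := h2
      _ = (∫ ω, f i ω ∂μ) * ∫ ω, ∏ j ∈ s, f j ω ∂μ := by rw [h4]; ring

/-- The one-step moment bound `λp + λ⁻¹q + (1-p-q) ≤ exp(-γ²/2)`. -/
lemma aux_factor_bound {a γ : ℝ} (ha : 0 < a) (hγ : 0 < γ) (h1 : 2 * a + γ ≤ 1) :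
    Real.sqrt (a / (a + γ)) * (a + γ) + (Real.sqrt (a / (a + γ)))⁻¹ * a
      + (1 - (a + γ) - a) ≤ Real.exp (-γ ^ 2 / 2) := by
  have hp : (0:ℝ) < a + γ := by linarith
  set sp := Real.sqrt (a + γ) with hsp
  set sq := Real.sqrt a with hsq
  have hsp0 : 0 < sp := Real.sqrt_pos.mpr hp
  have hsq0 : 0 < sq := Real.sqrt_pos.mpr ha
  have hsp2 : sp ^ 2 = a + γ := Real.sq_sqrt hp.le
  have hsq2 : sq ^ 2 = a := Real.sq_sqrt ha.le
  have hdiv : Real.sqrt (a / (a + γ)) = sq / sp := Real.sqrt_div ha.le _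
  have hterm1 : Real.sqrt (a / (a + γ)) * (a + γ) = sq * sp := by
    rw [hdiv, ← hsp2]; field_simp
  have hterm2 : (Real.sqrt (a / (a + γ)))⁻¹ * a = sp * sq := by
    rw [hdiv, ← hsq2]; field_simp
  rw [hterm1, hterm2]
  have hmul : (sp - sq) * (sp + sq) = γ := by nlinarith [hsp2, hsq2]
  have hsum2 : (sp + sq) ^ 2 ≤ 2 := by nlinarith [sq_nonneg (sp - sq)]
  have hkey : γ ^ 2 / 2 ≤ (sp - sq) ^ 2 := by
    have hγ2 : γ ^ 2 = (sp - sq) ^ 2 * (sp + sq) ^ 2 := by rw [← hmul]; ring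
    nlinarith [sq_nonneg (sp - sq), sq_nonneg (sp + sq)]
  have hexp : -γ ^ 2 / 2 + 1 ≤ Real.exp (-γ ^ 2 / 2) := Real.add_one_le_exp _
  nlinarith [hsp2, hsq2]

/-- Pointwise hinge bound by a geometric weight. -/
lemma aux_max_le (lam : ℝ) (h0 : 0 < lam) (h1 : lam ≤ 1) (N x y : ℕ)
    (hx : x ≤ N) (hy : y ≤ N) :
    max (1 + (y : ℝ) - x) 0 ≤ ((N : ℝ) + 1) * (lam ^ x * lam⁻¹ ^ y) := by
  have hinv1 : 1 ≤ lam⁻¹ := (one_le_inv₀ h0).mpr h1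
  have hrpos : 0 < lam ^ x * lam⁻¹ ^ y := by positivity
  rcases le_or_gt x y with h | h
  · have hge1 : 1 ≤ lam ^ x * lam⁻¹ ^ y := by
      have heq : lam ^ x * lam⁻¹ ^ y = lam⁻¹ ^ (y - x) := by
        have hxy : y - x + x = y := Nat.sub_add_cancel h
        calc lam ^ x * lam⁻¹ ^ y = lam ^ x * (lam⁻¹ ^ (y - x) * lam⁻¹ ^ x) := by
              rw [← pow_add, hxy]
          _ = lam⁻¹ ^ (y - x) * (lam * lam⁻¹) ^ x := by rw [mul_pow]; ring
          _ = lam⁻¹ ^ (y - x) := by rw [mul_inv_cancel₀ h0.ne', one_pow, mul_one]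
      rw [heq]
      exact one_le_pow₀ hinv1
    refine max_le ?_ (by positivity)
    calc 1 + (y : ℝ) - x ≤ (N : ℝ) + 1 := by
          have : (y : ℝ) ≤ N := by exact_mod_cast hy
          have : (0:ℝ) ≤ x := Nat.cast_nonneg x
          linarith [show (y:ℝ) ≤ N from by exact_mod_cast hy]
      _ = ((N : ℝ) + 1) * 1 := by ring
      _ ≤ ((N : ℝ) + 1) * (lam ^ x * lam⁻¹ ^ y) := by
          apply mul_le_mul_of_nonneg_left hge1; positivity
  · have : 1 + (y : ℝ) - x ≤ 0 := by
      have : (y : ℝ) + 1 ≤ x := by exact_mod_cast h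
      linarith
    refine max_le (le_trans this (by positivity)) (by positivity)

/-- Hinge-loss potential bound: `E[L_hinge^Y(X)] ≤ (N+1)·exp(-γ²N/2)` where `X`
counts `N` i.i.d. draws from the edge-over-random distribution `u^Y_γ`. -/
theorem stmt_12 {Ω : Type*} [MeasurableSpace Ω] (μ : Measure Ω) [IsProbabilityMeasure μ]
    (k N : ℕ) (hk : 2 ≤ k) (Y : Finset (Fin k)) (hY : Y.Nonempty) (hY' : Y ≠ Finset.univ)
    (γ a : ℝ) (hγ0 : 0 < γ) (hγ1 : γ < 1) (ha : 0 < a)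
    (D : Fin N → Ω → Fin k) (hmeas : ∀ i, Measurable (D i))
    (hindep : iIndepFun D μ)
    (hident : ∀ i j, μ {ω | D i ω = j} =
      ENNReal.ofReal (if j ∈ Y then a + γ else a)) :
    ∫ ω, (1 / ((Y.card : ℝ) * Yᶜ.card)) *
        ∑ l ∈ Y, ∑ r ∈ Yᶜ,
          max (1 + ((Finset.univ.filter fun i => D i ω = r).card : ℝ) -
            (Finset.univ.filter fun i => D i ω = l).card) 0 ∂μ ≤
      (N + 1) * Real.exp (-γ ^ 2 * N / 2) := by
  classical
  have hYc : Yᶜ.Nonempty := by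
    rwa [Finset.nonempty_iff_ne_empty, ne_eq, Finset.compl_eq_empty_iff]
  have hYcard : (0:ℝ) < Y.card := by exact_mod_cast Finset.card_pos.mpr hY
  have hYccard : (0:ℝ) < Yᶜ.card := by exact_mod_cast Finset.card_pos.mpr hYc
  set w : ℝ := 1 / ((Y.card : ℝ) * Yᶜ.card) with hw_def
  have hw0 : 0 ≤ w := by positivity
  have hw : w * ((Y.card : ℝ) * Yᶜ.card) = 1 := by
    show (1 / ((Y.card : ℝ) * Yᶜ.card)) * ((Y.card : ℝ) * Yᶜ.card) = 1
    field_simp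
  rcases Nat.eq_zero_or_pos N with hN | hN
  · subst hN
    have hconst : ∀ ω : Ω, w *
        ∑ l ∈ Y, ∑ r ∈ Yᶜ,
          max (1 + ((Finset.univ.filter fun i => D i ω = r).card : ℝ) -
            (Finset.univ.filter fun i => D i ω = l).card) 0 = 1 := by
      intro ω
      have h1 : ∀ l r : Fin k,
          max (1 + ((Finset.univ.filter fun i : Fin 0 => D i ω = r).card : ℝ) -
            ((Finset.univ.filter fun i : Fin 0 => D i ω = l).card : ℝ)) 0 = 1 := by
        intro l r; simp
      simp_rw [h1]
      simp only [Finset.sum_const, nsmul_eq_mul, mul_one]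
      rw [← mul_assoc] at hw ⊢
      exact hw
    simp_rw [hconst]
    simp
  · obtain ⟨i0⟩ : Nonempty (Fin N) := ⟨⟨0, hN⟩⟩
    have hpre : ∀ i j, μ (D i ⁻¹' {j}) = ENNReal.ofReal (if j ∈ Y then a + γ else a) := by
      intro i j
      have hset : D i ⁻¹' {j} = {ω | D i ω = j} := by ext ω; simp
      rw [hset, hident i j]
    have hprnonneg : ∀ j : Fin k, 0 ≤ (if j ∈ Y then a + γ else a) := by
      intro j; split <;> linarith
    have hpreval : ∀ i j, (μ (D i ⁻¹' {j})).toReal = (if j ∈ Y then a + γ else a) := by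
      intro i j; rw [hpre i j, ENNReal.toReal_ofReal (hprnonneg j)]
    -- total probability identity
    have hsum : (Y.card : ℝ) * (a + γ) + (Yᶜ.card : ℝ) * a = 1 := by
      have h1 := aux_integral_comp_fin μ (D i0) (hmeas i0) (fun _ => (1:ℝ))
      simp only [mul_one, integral_const, measure_univ, ENNReal.toReal_one, smul_eq_mul, probReal_univ,
        one_mul] at h1
      simp_rw [hpreval i0] at h1
      rw [← Finset.sum_add_sum_compl Y,
        show ∑ j ∈ Y, (if j ∈ Y then a + γ else a) = ∑ _j ∈ Y, (a + γ) from
          Finset.sum_congr rfl (fun j hj => if_pos hj),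
        show ∑ j ∈ Yᶜ, (if j ∈ Y then a + γ else a) = ∑ _j ∈ Yᶜ, a from
          Finset.sum_congr rfl (fun j hj => if_neg (Finset.mem_compl.mp hj)),
        Finset.sum_const, Finset.sum_const, nsmul_eq_mul, nsmul_eq_mul] at h1
      exact h1.symm
    have h2aγ : 2 * a + γ ≤ 1 := by
      have hY1 : (1:ℝ) ≤ Y.card := by exact_mod_cast Finset.card_pos.mpr hY
      have hYc1 : (1:ℝ) ≤ Yᶜ.card := by exact_mod_cast Finset.card_pos.mpr hYc
      nlinarith
    set lam : ℝ := Real.sqrt (a / (a + γ)) with hlam_def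
    have hpγ : (0:ℝ) < a + γ := by linarith
    have hlam0 : 0 < lam := Real.sqrt_pos.mpr (by positivity)
    have hlam1 : lam ≤ 1 := by
      rw [hlam_def, show (1:ℝ) = Real.sqrt 1 from (Real.sqrt_one).symm]
      apply Real.sqrt_le_sqrt
      rw [div_le_one hpγ]; linarith
    have hinv1 : 1 ≤ lam⁻¹ := (one_le_inv₀ hlam0).mpr hlam1
    set Ev : ℝ := lam * (a + γ) + lam⁻¹ * a + (1 - (a + γ) - a) with hEv_def
    have hEv0 : 0 ≤ Ev := by
      have h1 : 0 ≤ lam * (a + γ) := by positivity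
      have h2 : 0 ≤ lam⁻¹ * a := by positivity
      have h3 : 0 ≤ 1 - (a + γ) - a := by linarith
      rw [hEv_def]; linarith
    have hEvle : Ev ≤ Real.exp (-γ ^ 2 / 2) := aux_factor_bound ha hγ0 h2aγ
    -- the weight functions
    set g : Fin k → Fin k → Fin k → ℝ :=
      fun l r j => if j = l then lam else if j = r then lam⁻¹ else 1 with hg_def
    have hgnonneg : ∀ l r j, 0 ≤ g l r j := by
      intro l r j; rw [hg_def]; dsimp only
      split
      · exact hlam0.le
      · split
        · positivity
        · norm_num
    have hgle : ∀ l r j, g l r j ≤ lam⁻¹ := by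
      intro l r j; rw [hg_def]; dsimp only
      split
      · exact le_trans hlam1 hinv1
      · split
        · exact le_refl _
        · exact hinv1
    -- expectation of g(D i)
    have hexp : ∀ l ∈ Y, ∀ r ∈ Yᶜ, ∀ i, ∫ ω, g l r (D i ω) ∂μ = Ev := by
      intro l hl r hr i
      have hlr : l ≠ r := fun h => (Finset.mem_compl.mp hr) (h ▸ hl)
      rw [aux_integral_comp_fin μ (D i) (hmeas i) (g l r)]
      have hterm : ∀ j, (μ (D i ⁻¹' {j})).toReal * g l r j
          = (if j ∈ Y then a + γ else a) + (if j ∈ Y then a + γ else a) * (g l r j - 1) := by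
        intro j; rw [hpreval i j]; ring
      simp_rw [hterm]
      rw [Finset.sum_add_distrib]
      have hfirst : ∑ j : Fin k, (if j ∈ Y then a + γ else a) = 1 := by
        rw [← Finset.sum_add_sum_compl Y,
          show ∑ j ∈ Y, (if j ∈ Y then a + γ else a) = ∑ _j ∈ Y, (a + γ) from
            Finset.sum_congr rfl (fun j hj => if_pos hj),
          show ∑ j ∈ Yᶜ, (if j ∈ Y then a + γ else a) = ∑ _j ∈ Yᶜ, a from
            Finset.sum_congr rfl (fun j hj => if_neg (Finset.mem_compl.mp hj)),
          Finset.sum_const, Finset.sum_const, nsmul_eq_mul, nsmul_eq_mul]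
        exact hsum
      have hsecond : ∑ j : Fin k, (if j ∈ Y then a + γ else a) * (g l r j - 1)
          = (a + γ) * (lam - 1) + a * (lam⁻¹ - 1) := by
        rw [← Finset.sum_subset (Finset.subset_univ ({l, r} : Finset (Fin k)))
          (fun j _ hj => by
            simp only [Finset.mem_insert, Finset.mem_singleton, not_or] at hj
            rw [hg_def]; dsimp only
            rw [if_neg hj.1, if_neg hj.2]; ring)]
        rw [Finset.sum_pair hlr]
        rw [hg_def]; dsimp only
        rw [if_pos rfl, if_neg (Ne.symm hlr), if_pos rfl,
          if_pos hl, if_neg (Finset.mem_compl.mp hr)]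
      rw [hfirst, hsecond, hEv_def]; ring
    -- product formula
    have hintprod : ∀ l ∈ Y, ∀ r ∈ Yᶜ, ∫ ω, ∏ i : Fin N, g l r (D i ω) ∂μ = Ev ^ N := by
      intro l hl r hr
      have hindep' : iIndepFun (fun i => g l r ∘ D i) μ :=
        hindep.comp (fun _ => g l r) (fun _ => measurable_of_countable _)
      rw [show (∫ ω, ∏ i : Fin N, g l r (D i ω) ∂μ)
            = ∏ i : Fin N, ∫ ω, g l r (D i ω) ∂μ from
          aux_integral_prod (fun i ω => g l r (D i ω))
            (fun i => (measurable_of_countable (g l r)).comp (hmeas i)) hindep' Finset.univ]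
      rw [Finset.prod_congr rfl (fun i _ => hexp l hl r hr i)]
      simp [Finset.prod_const]
    -- measurability and integrability of the product
    have hmeasprod : ∀ l r, Measurable (fun ω => ∏ i : Fin N, g l r (D i ω)) :=
      fun l r => Finset.measurable_prod Finset.univ
        (fun i _ => (measurable_of_countable (g l r)).comp (hmeas i))
    have hintegprod : ∀ l r, Integrable (fun ω => ∏ i : Fin N, g l r (D i ω)) μ := by
      intro l r
      refine (integrable_const (lam⁻¹ ^ N)).mono' (hmeasprod l r).aestronglyMeasurable ?_
      refine Filter.Eventually.of_forall fun ω => ?_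
      have hnn : 0 ≤ ∏ i : Fin N, g l r (D i ω) :=
        Finset.prod_nonneg fun i _ => hgnonneg l r (D i ω)
      rw [Real.norm_eq_abs, abs_of_nonneg hnn]
      calc ∏ i : Fin N, g l r (D i ω) ≤ ∏ _i : Fin N, lam⁻¹ :=
            Finset.prod_le_prod (fun i _ => hgnonneg l r (D i ω))
              (fun i _ => hgle l r (D i ω))
        _ = lam⁻¹ ^ N := by simp [Finset.prod_const]
    -- pointwise product identity
    have hpointprod : ∀ l ∈ Y, ∀ r ∈ Yᶜ, ∀ ω,
        ∏ i : Fin N, g l r (D i ω)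
          = lam ^ (Finset.univ.filter fun i => D i ω = l).card
            * lam⁻¹ ^ (Finset.univ.filter fun i => D i ω = r).card := by
      intro l hl r hr ω
      have hlr : l ≠ r := fun h => (Finset.mem_compl.mp hr) (h ▸ hl)
      have hsplit : ∀ j, g l r j = (if j = l then lam else 1) * (if j = r then lam⁻¹ else 1) := by
        intro j
        rw [hg_def]; dsimp only
        by_cases h1 : j = l
        · rw [if_pos h1, if_pos h1, if_neg (h1 ▸ hlr), mul_one]
        · rw [if_neg h1, if_neg h1, one_mul]
      simp_rw [hsplit]
      rw [Finset.prod_mul_distrib, Finset.prod_ite, Finset.prod_const, Finset.prod_const_one,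
        mul_one, Finset.prod_ite, Finset.prod_const, Finset.prod_const_one, mul_one]
    -- the dominating function
    have hcardle : ∀ (j : Fin k) ω, (Finset.univ.filter fun i => D i ω = j).card ≤ N := by
      intro j ω
      calc (Finset.univ.filter fun i => D i ω = j).card
          ≤ (Finset.univ : Finset (Fin N)).card := Finset.card_filter_le _ _
        _ = N := by simp
    have hptbound : ∀ l ∈ Y, ∀ r ∈ Yᶜ, ∀ ω,
        max (1 + ((Finset.univ.filter fun i => D i ω = r).card : ℝ) -
            (Finset.univ.filter fun i => D i ω = l).card) 0
          ≤ ((N : ℝ) + 1) * ∏ i : Fin N, g l r (D i ω) := by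
      intro l hl r hr ω
      rw [hpointprod l hl r hr ω]
      exact aux_max_le lam hlam0 hlam1 N _ _ (hcardle l ω) (hcardle r ω)
    -- main estimate
    have hstep1 : ∫ ω, w * ∑ l ∈ Y, ∑ r ∈ Yᶜ,
          max (1 + ((Finset.univ.filter fun i => D i ω = r).card : ℝ) -
            (Finset.univ.filter fun i => D i ω = l).card) 0 ∂μ
        ≤ ∫ ω, ∑ l ∈ Y, ∑ r ∈ Yᶜ,
          (w * ((N : ℝ) + 1)) * ∏ i : Fin N, g l r (D i ω) ∂μ := by
      apply integral_mono_of_nonneg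
      · refine Filter.Eventually.of_forall fun ω => ?_
        apply mul_nonneg hw0
        exact Finset.sum_nonneg fun l _ => Finset.sum_nonneg fun r _ => le_max_right _ _
      · apply integrable_finset_sum
        intro l _
        apply integrable_finset_sum
        intro r _
        exact (hintegprod l r).const_mul _
      · refine Filter.Eventually.of_forall fun ω => ?_
        dsimp only
        rw [Finset.mul_sum]
        apply Finset.sum_le_sum
        intro l hl
        rw [Finset.mul_sum]
        apply Finset.sum_le_sum
        intro r hr
        rw [mul_assoc]
        exact mul_le_mul_of_nonneg_left (hptbound l hl r hr ω) hw0
    have hstep2 : ∫ ω, ∑ l ∈ Y, ∑ r ∈ Yᶜ,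
          (w * ((N : ℝ) + 1)) * ∏ i : Fin N, g l r (D i ω) ∂μ
        = ((N : ℝ) + 1) * Ev ^ N := by
      rw [integral_finset_sum _ (fun l _ => integrable_finset_sum _
        (fun r _ => (hintegprod l r).const_mul _))]
      rw [Finset.sum_congr rfl (fun l hl => integral_finset_sum _
        (fun r _ => (hintegprod l r).const_mul _))]
      rw [Finset.sum_congr rfl (fun l hl => Finset.sum_congr rfl (fun r hr => by
        rw [integral_const_mul, hintprod l hl r hr]))]
      simp only [Finset.sum_const, nsmul_eq_mul]
      rw [hw_def]
      field_simp
    have hfinal : ((N : ℝ) + 1) * Ev ^ N ≤ ((N : ℝ) + 1) * Real.exp (-γ ^ 2 * N / 2) := by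
      have h1 : Ev ^ N ≤ Real.exp (-γ ^ 2 / 2) ^ N := pow_le_pow_left₀ hEv0 hEvle N
      have h2 : Real.exp (-γ ^ 2 / 2) ^ N = Real.exp (-γ ^ 2 * N / 2) := by
        rw [← Real.exp_nat_mul]
        congr 1
        ring
      rw [← h2]
      apply mul_le_mul_of_nonneg_left h1
      positivity
    calc ∫ ω, w * ∑ l ∈ Y, ∑ r ∈ Yᶜ,
          max (1 + ((Finset.univ.filter fun i => D i ω = r).card : ℝ) -
            (Finset.univ.filter fun i => D i ω = l).card) 0 ∂μ
        ≤ ((N : ℝ) + 1) * Ev ^ N := le_trans hstep1 (le_of_eq hstep2)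
      _ ≤ ((N : ℝ) + 1) * Real.exp (-γ ^ 2 * N / 2) := hfinal
end

section
/- For the hinge-loss potentials, the per-round weight is bounded by 2: for any state vector s ∈ ℝ^k, any two labels l* ∈ Y and r* ∈ Yᶜ, and any distribution of the random count vector X, E[L_hinge^Y(s + e_{r*} + X)] − E[L_hinge^Y(s + e_{l*} + X)] ≤ 2. -/
open MeasureTheory

lemma aux_max (A d1 d2 : ℝ) (h1 : 0 ≤ d1) (h2 : 0 ≤ d2) :
    max (A + d1) 0 - max (A - d2) 0 ≤ d1 + d2 := by
  have h3 := le_max_left (A - d2) (0:ℝ)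
  have h4 := le_max_right (A - d2) (0:ℝ)
  rw [sub_le_iff_le_add]
  apply max_le <;> linarith

theorem stmt_13 {Ω : Type*} [MeasurableSpace Ω] (μ : Measure Ω) [IsProbabilityMeasure μ]
    (k : ℕ) (hk : 2 ≤ k) (Y : Finset (Fin k)) (hY : Y.Nonempty) (hY' : Y ≠ Finset.univ)
    (s : Fin k → ℝ) (lstar rstar : Fin k) (hl : lstar ∈ Y) (hr : rstar ∈ Yᶜ)
    (X : Ω → Fin k → ℝ)
    (hint_r : Integrable (fun ω =>
      (1 / ((Y.card : ℝ) * Yᶜ.card)) *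
        ∑ l ∈ Y, ∑ r ∈ Yᶜ,
          max (1 + (s + Pi.single rstar 1 + X ω : Fin k → ℝ) r -
            (s + Pi.single rstar 1 + X ω : Fin k → ℝ) l) 0) μ)
    (hint_l : Integrable (fun ω =>
      (1 / ((Y.card : ℝ) * Yᶜ.card)) *
        ∑ l ∈ Y, ∑ r ∈ Yᶜ,
          max (1 + (s + Pi.single lstar 1 + X ω : Fin k → ℝ) r -
            (s + Pi.single lstar 1 + X ω : Fin k → ℝ) l) 0) μ) :
    (∫ ω, (1 / ((Y.card : ℝ) * Yᶜ.card)) *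
        ∑ l ∈ Y, ∑ r ∈ Yᶜ,
          max (1 + (s + Pi.single rstar 1 + X ω : Fin k → ℝ) r -
            (s + Pi.single rstar 1 + X ω : Fin k → ℝ) l) 0 ∂μ) -
      (∫ ω, (1 / ((Y.card : ℝ) * Yᶜ.card)) *
        ∑ l ∈ Y, ∑ r ∈ Yᶜ,
          max (1 + (s + Pi.single lstar 1 + X ω : Fin k → ℝ) r -
            (s + Pi.single lstar 1 + X ω : Fin k → ℝ) l) 0 ∂μ) ≤ 2 := by
  have ha : (1:ℝ) ≤ (Y.card : ℝ) := by
    exact_mod_cast Nat.one_le_iff_ne_zero.mpr (Finset.card_ne_zero_of_mem hl)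
  have hb : (1:ℝ) ≤ (Yᶜ.card : ℝ) := by
    exact_mod_cast Nat.one_le_iff_ne_zero.mpr (Finset.card_ne_zero_of_mem hr)
  have hw : 0 ≤ (1 / ((Y.card : ℝ) * Yᶜ.card)) := by positivity
  have key : ∀ ω : Ω,
      ((1 / ((Y.card : ℝ) * Yᶜ.card)) *
        ∑ l ∈ Y, ∑ r ∈ Yᶜ,
          max (1 + (s + Pi.single rstar 1 + X ω : Fin k → ℝ) r -
            (s + Pi.single rstar 1 + X ω : Fin k → ℝ) l) 0) -
      ((1 / ((Y.card : ℝ) * Yᶜ.card)) *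
        ∑ l ∈ Y, ∑ r ∈ Yᶜ,
          max (1 + (s + Pi.single lstar 1 + X ω : Fin k → ℝ) r -
            (s + Pi.single lstar 1 + X ω : Fin k → ℝ) l) 0) ≤ 2 := by
    intro ω
    rw [← mul_sub, ← Finset.sum_sub_distrib]
    have hsum : (∑ l ∈ Y, (∑ r ∈ Yᶜ,
          max (1 + (s + Pi.single rstar 1 + X ω : Fin k → ℝ) r -
            (s + Pi.single rstar 1 + X ω : Fin k → ℝ) l) 0 -
        ∑ r ∈ Yᶜ,
          max (1 + (s + Pi.single lstar 1 + X ω : Fin k → ℝ) r -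
            (s + Pi.single lstar 1 + X ω : Fin k → ℝ) l) 0))
        ≤ ∑ l ∈ Y, ∑ r ∈ Yᶜ,
          ((if r = rstar then (1:ℝ) else 0) + (if l = lstar then (1:ℝ) else 0)) := by
      apply Finset.sum_le_sum
      intro l hlY
      rw [← Finset.sum_sub_distrib]
      apply Finset.sum_le_sum
      intro r hrYc
      have hl_ne : l ≠ rstar := by
        intro h; subst h; exact (Finset.mem_compl.mp hr) hlY
      have hr_ne : r ≠ lstar := by
        intro h; subst h; exact (Finset.mem_compl.mp hrYc) hl
      simp only [Pi.add_apply, Pi.single_apply, if_neg hl_ne, if_neg hr_ne]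
      have := aux_max (1 + (s r + X ω r) - (s l + X ω l))
        (if r = rstar then (1:ℝ) else 0) (if l = lstar then (1:ℝ) else 0)
        (by positivity) (by positivity)
      by_cases h1 : r = rstar <;> by_cases h2 : l = lstar <;>
        simp only [h1, h2, if_pos, if_neg, if_true] at this ⊢ <;>
        · simp only [if_false, add_zero, sub_zero] at this ⊢; ring_nf at this ⊢; linarith
    have hsum2 : (∑ l ∈ Y, ∑ r ∈ Yᶜ,
          ((if r = rstar then (1:ℝ) else 0) + (if l = lstar then (1:ℝ) else 0)))
        = (Y.card : ℝ) + (Yᶜ.card : ℝ) := by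
      simp [Finset.sum_add_distrib, Finset.sum_ite_eq', hr, hl, Finset.sum_const,
        mul_comm]
    calc (1 / ((Y.card : ℝ) * Yᶜ.card)) * _ ≤
        (1 / ((Y.card : ℝ) * Yᶜ.card)) * ((Y.card : ℝ) + (Yᶜ.card : ℝ)) := by
          apply mul_le_mul_of_nonneg_left _ hw
          rw [← hsum2]; exact hsum
      _ ≤ 2 := by
          rw [div_mul_eq_mul_div, one_mul, div_le_iff₀ (by positivity)]
          nlinarith
  rw [← integral_sub hint_r hint_l]
  calc (∫ ω, _ ∂μ) ≤ ∫ _ω, (2:ℝ) ∂μ :=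
        integral_mono (hint_r.sub hint_l) (integrable_const 2) key
    _ = 2 := by simp
end
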